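/- Assume the dual-averaging setup with gradient-estimate assumptions, with step sizes satisfying Σ_{ℓ=1}^∞ η^ℓ = ∞ and Σ_{ℓ=1}^∞ (η^ℓ)² < ∞, and with bias level β ≤ ε/(6n Σ_{i=1}^n |S_i||A_i|) for a given ε > 0. Then almost surely there exists K₀ such that for all k ≥ K₀: max_{θ ∈ P^δ} Σ_{ℓ=1}^k (η^ℓ/w^k) Ψ(θ, ρ^ℓ) < ε/2. -/

import Mathlib

open scoped BigOperators
open Finset MeasureTheory Filter

noncomputable section

/-- The probability simplex on a finite set `X`. -/
def probSimplex (X : Type*) [Fintype X] : Set (X → ℝ) :=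
  {x | (∀ p, 0 ≤ x p) ∧ ∑ p, x p = 1}

/-- Payoff of a player with reward `ri` at a profile `ρ` in the virtual game. -/
def payoff {n : ℕ} {S A : Fin n → Type*} [∀ j, Fintype (S j)] [∀ j, Fintype (A j)]
    (ri : (∀ j, S j) → (∀ j, A j) → ℝ) (ρ : ∀ j, S j × A j → ℝ) : ℝ :=
  ∑ s : ∀ j, S j, ∑ a : ∀ j, A j, (∏ j, ρ j (s j, a j)) * ri s a

open Classical in
/-- The own-gradient vector `v_i(ρ_{-i})`. -/
def ownGrad {n : ℕ} {S A : Fin n → Type*} [∀ j, Fintype (S j)] [∀ j, Fintype (A j)]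
    (ri : (∀ j, S j) → (∀ j, A j) → ℝ) (i : Fin n) (ρ : ∀ j, S j × A j → ℝ) :
    S i × A i → ℝ :=
  fun p => payoff ri (Function.update ρ i (fun q => if q = p then (1:ℝ) else 0))

/-- The Nikaido–Isoda function of the virtual game. -/
def NI {n : ℕ} {S A : Fin n → Type*} [∀ j, Fintype (S j)] [∀ j, Fintype (A j)]
    (r : ∀ _ : Fin n, (∀ j, S j) → (∀ j, A j) → ℝ) (θ ρ : ∀ j, S j × A j → ℝ) : ℝ :=
  ∑ i, (payoff (r i) (Function.update ρ i (θ i)) - payoff (r i) ρ)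

namespace DANIaux
open Topology
open scoped NNReal ENNReal

variable {X : Type*} [Fintype X]

/-- objective -/
def obj (h : (X → ℝ) → ℝ) (Y x : X → ℝ) : ℝ := (∑ p, x p * Y p) - h x

lemma quarter {Q : Set (X → ℝ)} (hQcvx : Convex ℝ Q) {K : ℝ} (hK : 0 < K)
    {h : (X → ℝ) → ℝ} (hconv : ConvexOn ℝ Q (fun x => h x - K / 2 * ∑ p, (x p)^2))
    {Y x y : X → ℝ} (hx : x ∈ Q) (hy : y ∈ Q)
    (hmax : ∀ z ∈ Q, obj h Y z ≤ obj h Y x) :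
    obj h Y y + K / 4 * ∑ p, (x p - y p)^2 ≤ obj h Y x := by
  have hm : (1/2:ℝ) • x + (1/2:ℝ) • y ∈ Q := hQcvx hx hy (by norm_num) (by norm_num) (by norm_num)
  have hg := hconv.2 hx hy (by norm_num : (0:ℝ) ≤ 1/2) (by norm_num : (0:ℝ) ≤ 1/2) (by norm_num)
  have hsq : ∑ p, (((1/2:ℝ) • x + (1/2:ℝ) • y) p)^2
      = (1/2) * ∑ p, (x p)^2 + (1/2) * ∑ p, (y p)^2 - (1/4) * ∑ p, (x p - y p)^2 := by
    simp only [Finset.mul_sum, ← Finset.sum_add_distrib, ← Finset.sum_sub_distrib]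
    refine Finset.sum_congr rfl fun p _ => ?_
    simp only [Pi.add_apply, Pi.smul_apply, smul_eq_mul]; ring
  have hlin : ∑ p, (((1/2:ℝ) • x + (1/2:ℝ) • y) p) * Y p
      = (1/2) * ∑ p, x p * Y p + (1/2) * ∑ p, y p * Y p := by
    simp only [Finset.mul_sum, ← Finset.sum_add_distrib]
    refine Finset.sum_congr rfl fun p _ => ?_
    simp only [Pi.add_apply, Pi.smul_apply, smul_eq_mul]; ring
  have h1 := hmax _ hm
  simp only [obj] at h1 ⊢
  simp only [smul_eq_mul] at hg
  rw [hsq] at hg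
  rw [hlin] at h1
  nlinarith [hg, h1]

lemma stab {Q : Set (X → ℝ)} (hQcvx : Convex ℝ Q) {K : ℝ} (hK : 0 < K)
    {h : (X → ℝ) → ℝ} (hconv : ConvexOn ℝ Q (fun x => h x - K / 2 * ∑ p, (x p)^2))
    {Y Y' x y : X → ℝ} (hx : x ∈ Q) (hy : y ∈ Q)
    (hmx : ∀ z ∈ Q, obj h Y z ≤ obj h Y x)
    (hmy : ∀ z ∈ Q, obj h Y' z ≤ obj h Y' y) :
    K / 2 * ∑ p, (x p - y p)^2 ≤ ∑ p, (y p - x p) * (Y' p - Y p) := by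
  have h1 := quarter hQcvx hK hconv hx hy hmx
  have h2 := quarter hQcvx hK hconv hy hx hmy
  simp only [obj] at h1 h2
  have hsym : ∑ p, (y p - x p)^2 = ∑ p, (x p - y p)^2 :=
    Finset.sum_congr rfl fun p _ => by ring
  rw [hsym] at h2
  have hexp : ∑ p, (y p - x p) * (Y' p - Y p)
      = (∑ p, y p * Y' p) + (∑ p, x p * Y p) - (∑ p, x p * Y' p) - (∑ p, y p * Y p) := by
    simp only [← Finset.sum_add_distrib, ← Finset.sum_sub_distrib]
    exact Finset.sum_congr rfl fun p _ => by ring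
  rw [hexp]; linarith

lemma argmax_unique {Q : Set (X → ℝ)} (hQcvx : Convex ℝ Q) {K : ℝ} (hK : 0 < K)
    {h : (X → ℝ) → ℝ} (hconv : ConvexOn ℝ Q (fun x => h x - K / 2 * ∑ p, (x p)^2))
    {Y x y : X → ℝ} (hx : x ∈ Q) (hy : y ∈ Q)
    (hmx : ∀ z ∈ Q, obj h Y z ≤ obj h Y x)
    (hmy : ∀ z ∈ Q, obj h Y z ≤ obj h Y y) : x = y := by
  have h1 := stab hQcvx hK hconv hx hy hmx hmy
  simp only [sub_self, mul_zero, Finset.sum_const_zero] at h1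
  have h2 : ∑ p, (x p - y p)^2 ≤ 0 := by
    by_contra hc
    push_neg at hc
    nlinarith
  have h3 : ∀ p ∈ Finset.univ, (x p - y p)^2 = 0 := by
    intro p hp
    have := Finset.sum_nonneg (fun q (_ : q ∈ Finset.univ) => sq_nonneg (x q - y q))
    have h4 : ∑ q, (x q - y q)^2 = 0 := le_antisymm h2 this
    have := (Finset.sum_eq_zero_iff_of_nonneg (fun q _ => sq_nonneg (x q - y q))).1 h4
    exact this p hp
  funext p
  have := h3 p (Finset.mem_univ p)
  nlinarith [this]


section ArgMax

variable {Q : Set (X → ℝ)} {K : ℝ} {h : (X → ℝ) → ℝ}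

lemma exists_argmax (hQcpt : IsCompact Q) (hQne : Q.Nonempty)
    (hcont : ContinuousOn h Q) (Y : X → ℝ) :
    ∃ x ∈ Q, ∀ z ∈ Q, obj h Y z ≤ obj h Y x := by
  have hc : ContinuousOn (obj h Y) Q := by
    apply ContinuousOn.sub _ hcont
    exact (continuous_finset_sum _ fun p _ => (continuous_apply p).mul continuous_const).continuousOn
  obtain ⟨x, hxQ, hmax⟩ := hQcpt.exists_isMaxOn hQne hc
  exact ⟨x, hxQ, fun z hz => hmax hz⟩

/-- The argmax map. -/
def argA (hQcpt : IsCompact Q) (hQne : Q.Nonempty) (hcont : ContinuousOn h Q)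
    (Y : X → ℝ) : X → ℝ := (exists_argmax hQcpt hQne hcont Y).choose

lemma argA_mem (hQcpt : IsCompact Q) (hQne : Q.Nonempty) (hcont : ContinuousOn h Q)
    (Y : X → ℝ) : argA hQcpt hQne hcont Y ∈ Q :=
  (exists_argmax hQcpt hQne hcont Y).choose_spec.1

lemma argA_max (hQcpt : IsCompact Q) (hQne : Q.Nonempty) (hcont : ContinuousOn h Q)
    (Y : X → ℝ) : ∀ z ∈ Q, obj h Y z ≤ obj h Y (argA hQcpt hQne hcont Y) :=
  (exists_argmax hQcpt hQne hcont Y).choose_spec.2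

lemma argA_eq (hQcpt : IsCompact Q) (hQne : Q.Nonempty) (hcont : ContinuousOn h Q)
    (hQcvx : Convex ℝ Q) (hK : 0 < K)
    (hconv : ConvexOn ℝ Q (fun x => h x - K / 2 * ∑ p, (x p)^2))
    {Y x : X → ℝ} (hx : x ∈ Q) (hmx : ∀ z ∈ Q, obj h Y z ≤ obj h Y x) :
    x = argA hQcpt hQne hcont Y :=
  argmax_unique hQcvx hK hconv hx (argA_mem hQcpt hQne hcont Y) hmx
    (argA_max hQcpt hQne hcont Y)

lemma argA_sq_lipschitz (hQcpt : IsCompact Q) (hQne : Q.Nonempty)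
    (hcont : ContinuousOn h Q) (hQcvx : Convex ℝ Q) (hK : 0 < K)
    (hconv : ConvexOn ℝ Q (fun x => h x - K / 2 * ∑ p, (x p)^2)) (Y Y' : X → ℝ) :
    ∑ p, (argA hQcpt hQne hcont Y p - argA hQcpt hQne hcont Y' p)^2
      ≤ (2 / K)^2 * ∑ p, (Y p - Y' p)^2 := by
  set x := argA hQcpt hQne hcont Y
  set y := argA hQcpt hQne hcont Y'
  have h1 : K / 2 * ∑ p, (x p - y p)^2 ≤ ∑ p, (y p - x p) * (Y' p - Y p) :=
    stab hQcvx hK hconv (argA_mem hQcpt hQne hcont Y) (argA_mem hQcpt hQne hcont Y')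
      (argA_max hQcpt hQne hcont Y) (argA_max hQcpt hQne hcont Y')
  have h2 : (∑ p, (y p - x p) * (Y' p - Y p))^2
      ≤ (∑ p, (y p - x p)^2) * ∑ p, (Y' p - Y p)^2 :=
    Finset.sum_mul_sq_le_sq_mul_sq _ _ _
  set D := ∑ p, (x p - y p)^2 with hD
  set B := ∑ p, (Y p - Y' p)^2 with hB
  have hsym : ∑ p, (y p - x p)^2 = D := Finset.sum_congr rfl fun p _ => by ring
  have hsymB : ∑ p, (Y' p - Y p)^2 = B := Finset.sum_congr rfl fun p _ => by ring
  rw [hsym, hsymB] at h2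
  have hD0 : 0 ≤ D := Finset.sum_nonneg fun p _ => sq_nonneg _
  have hB0 : 0 ≤ B := Finset.sum_nonneg fun p _ => sq_nonneg _
  rcases eq_or_lt_of_le hD0 with hD0' | hD0'
  · rw [← hD0']; positivity
  · set Sv := ∑ p, (y p - x p) * (Y' p - Y p) with hSv
    have h4 : (K / 2 * D) * (K / 2 * D) ≤ Sv * Sv :=
      mul_self_le_mul_self (by positivity) h1
    have h5 : K^2 / 4 * D * D ≤ D * B := by nlinarith [h4, h2]
    have h6 : K^2 / 4 * D ≤ B := le_of_mul_le_mul_right (by linarith [h5]) hD0'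
    rw [show (2 / K)^2 * B = 4 * B / K^2 by ring, le_div_iff₀ (by positivity)]
    nlinarith [h6]

lemma argA_coord_continuous (hQcpt : IsCompact Q) (hQne : Q.Nonempty)
    (hcont : ContinuousOn h Q) (hQcvx : Convex ℝ Q) (hK : 0 < K)
    (hconv : ConvexOn ℝ Q (fun x => h x - K / 2 * ∑ p, (x p)^2)) (p : X) :
    Continuous (fun Y => argA hQcpt hQne hcont Y p) := by
  rw [continuous_iff_continuousAt]
  intro Y0
  rw [ContinuousAt, tendsto_iff_dist_tendsto_zero]
  apply squeeze_zero (fun Y => dist_nonneg)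
    (g := fun Y => (2 / K) * Real.sqrt (∑ q, (Y q - Y0 q)^2))
  · intro Y
    have hsq := argA_sq_lipschitz hQcpt hQne hcont hQcvx hK hconv Y Y0
    have hone : (argA hQcpt hQne hcont Y p - argA hQcpt hQne hcont Y0 p)^2
        ≤ ∑ q, (argA hQcpt hQne hcont Y q - argA hQcpt hQne hcont Y0 q)^2 :=
      Finset.single_le_sum (f := fun q => (argA hQcpt hQne hcont Y q - argA hQcpt hQne hcont Y0 q)^2)
        (fun q _ => sq_nonneg _) (Finset.mem_univ p)
    rw [Real.dist_eq]
    have h2 : |argA hQcpt hQne hcont Y p - argA hQcpt hQne hcont Y0 p|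
        = Real.sqrt ((argA hQcpt hQne hcont Y p - argA hQcpt hQne hcont Y0 p)^2) :=
      (Real.sqrt_sq_eq_abs _).symm
    rw [h2]
    have h3 : (2 / K) * Real.sqrt (∑ q, (Y q - Y0 q)^2)
        = Real.sqrt ((2 / K)^2 * ∑ q, (Y q - Y0 q)^2) := by
      rw [Real.sqrt_mul (sq_nonneg _), Real.sqrt_sq (by positivity : (0:ℝ) ≤ 2 / K)]
    rw [h3]
    exact Real.sqrt_le_sqrt (le_trans hone hsq)
  · have hcsum : Continuous (fun Y : X → ℝ => (2 / K) * Real.sqrt (∑ q, (Y q - Y0 q)^2)) := by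
      apply Continuous.mul continuous_const
      apply Real.continuous_sqrt.comp
      exact continuous_finset_sum _ fun q _ => ((continuous_apply q).sub continuous_const).pow 2
    have := hcsum.tendsto Y0
    simpa using this

end ArgMax

section FTL

variable {Q : Set (X → ℝ)} {K : ℝ} {h : (X → ℝ) → ℝ}

/-- Follow-the-leader style regret bound for dual averaging. -/
lemma ftl_regret (hQcvx : Convex ℝ Q) (hK : 0 < K)
    (hconv : ConvexOn ℝ Q (fun x => h x - K / 2 * ∑ p, (x p)^2))
    (η : ℕ → ℝ) (R : ℕ → X → ℝ) (Y : ℕ → X → ℝ) (ρ : ℕ → X → ℝ)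
    (hY1 : ∀ p, Y 1 p = 0)
    (hYrec : ∀ k, 1 ≤ k → ∀ p, Y (k + 1) p = Y k p + η k * R k p)
    (hρmem : ∀ k, 1 ≤ k → ρ k ∈ Q)
    (hρmax : ∀ k, 1 ≤ k → ∀ z ∈ Q, obj h (Y k) z ≤ obj h (Y k) (ρ k)) :
    ∀ k, ∀ θ ∈ Q,
      ∑ ℓ ∈ Finset.Icc 1 k, η ℓ * ∑ p, (θ p - ρ ℓ p) * R ℓ p
        ≤ (h θ - h (ρ 1)) + ∑ ℓ ∈ Finset.Icc 1 k, 2 / K * (η ℓ)^2 * ∑ p, (R ℓ p)^2 := by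
  -- formula for Y
  have hYform : ∀ k, ∀ p, Y (k + 1) p = ∑ ℓ ∈ Finset.Icc 1 k, η ℓ * R ℓ p := by
    intro k
    induction k with
    | zero => intro p; simpa using hY1 p
    | succ m ih =>
      intro p
      rw [hYrec (m + 1) (Nat.le_add_left 1 m) p, ih p,
        Finset.sum_Icc_succ_top (Nat.le_add_left 1 m)]
  -- linear pairing with Y
  have hpair : ∀ k, ∀ x : X → ℝ, ∑ p, x p * Y (k + 1) p
      = ∑ ℓ ∈ Finset.Icc 1 k, η ℓ * ∑ p, x p * R ℓ p := by
    intro k x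
    have : ∀ p, x p * Y (k + 1) p = ∑ ℓ ∈ Finset.Icc 1 k, η ℓ * (x p * R ℓ p) := by
      intro p
      rw [hYform k p, Finset.mul_sum]
      exact Finset.sum_congr rfl fun ℓ _ => by ring
    rw [Finset.sum_congr rfl fun p _ => this p, Finset.sum_comm]
    exact Finset.sum_congr rfl fun ℓ _ => by rw [Finset.mul_sum]
  -- leader lemma
  have hleader : ∀ k, ∀ θ ∈ Q,
      (∑ ℓ ∈ Finset.Icc 1 k, η ℓ * ∑ p, θ p * R ℓ p) - h θ
        ≤ (∑ ℓ ∈ Finset.Icc 1 k, η ℓ * ∑ p, ρ (ℓ + 1) p * R ℓ p) - h (ρ 1) := by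
    intro k
    induction k with
    | zero =>
      intro θ hθ
      have := hρmax 1 le_rfl θ hθ
      simp only [obj, hY1, mul_zero, Finset.sum_const_zero] at this
      simpa using this
    | succ m ih =>
      intro θ hθ
      have hmem := hρmem (m + 2) (by omega)
      have h1 := hρmax (m + 2) (by omega) θ hθ
      simp only [obj] at h1
      rw [show m + 2 = (m + 1) + 1 by rfl, hpair (m + 1) θ, hpair (m + 1) (ρ (m + 2))] at h1
      have h2 := ih (ρ (m + 2)) hmem
      -- h1 : ∑_{ℓ ≤ m+1} η ⟨θ,R⟩ - h θ ≤ ∑_{ℓ ≤ m+1} η ⟨ρ^{m+2},R⟩ - h ρ^{m+2}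
      -- h2 : ∑_{ℓ ≤ m} η ⟨ρ^{m+2},R⟩ - h ρ^{m+2} ≤ ∑_{ℓ ≤ m} η ⟨ρ^{ℓ+1},R⟩ - h ρ¹
      rw [Finset.sum_Icc_succ_top (Nat.le_add_left 1 m),
        Finset.sum_Icc_succ_top (Nat.le_add_left 1 m)] at h1
      rw [Finset.sum_Icc_succ_top (Nat.le_add_left 1 m),
        Finset.sum_Icc_succ_top (Nat.le_add_left 1 m)]
      have h3 : m + 1 + 1 = m + 2 := rfl
      rw [h3] at h1 ⊢
      linarith [h1, h2]
  intro k θ hθ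
  -- per-step stability bound
  have hstep : ∀ ℓ, 1 ≤ ℓ → η ℓ * ∑ p, (ρ (ℓ + 1) p - ρ ℓ p) * R ℓ p
      ≤ 2 / K * (η ℓ)^2 * ∑ p, (R ℓ p)^2 := by
    intro ℓ hℓ
    have hs := stab hQcvx hK hconv (hρmem ℓ hℓ) (hρmem (ℓ + 1) (by omega))
      (hρmax ℓ hℓ) (hρmax (ℓ + 1) (by omega))
    have hYd : ∀ p, Y (ℓ + 1) p - Y ℓ p = η ℓ * R ℓ p := by
      intro p; rw [hYrec ℓ hℓ p]; ring
    have hs' : K / 2 * ∑ p, (ρ ℓ p - ρ (ℓ + 1) p)^2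
        ≤ η ℓ * ∑ p, (ρ (ℓ + 1) p - ρ ℓ p) * R ℓ p := by
      refine le_trans hs (le_of_eq ?_)
      rw [Finset.mul_sum]
      exact Finset.sum_congr rfl fun p _ => by rw [hYd p]; ring
    set Xv := η ℓ * ∑ p, (ρ (ℓ + 1) p - ρ ℓ p) * R ℓ p with hXv
    set D := ∑ p, (ρ ℓ p - ρ (ℓ + 1) p)^2 with hD
    set S2 := ∑ p, (R ℓ p)^2 with hS2
    have hD0 : 0 ≤ D := Finset.sum_nonneg fun p _ => sq_nonneg _
    have hS20 : 0 ≤ S2 := Finset.sum_nonneg fun p _ => sq_nonneg _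
    have hX0 : 0 ≤ Xv := le_trans (by positivity) hs'
    have hcs : (∑ p, (ρ (ℓ + 1) p - ρ ℓ p) * R ℓ p)^2 ≤ D * S2 := by
      have := Finset.sum_mul_sq_le_sq_mul_sq Finset.univ
        (fun p => ρ (ℓ + 1) p - ρ ℓ p) (fun p => R ℓ p)
      have hDsym : ∑ p, (ρ (ℓ + 1) p - ρ ℓ p)^2 = D :=
        Finset.sum_congr rfl fun p _ => by ring
      rw [hDsym] at this
      exact this
    have hX2 : Xv^2 ≤ (η ℓ)^2 * (D * S2) := by
      rw [hXv, mul_pow]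
      exact mul_le_mul_of_nonneg_left hcs (sq_nonneg _)
    rcases eq_or_lt_of_le hX0 with hX0' | hX0'
    · rw [← hX0']; positivity
    · -- Xv > 0 : from K/2 D ≤ Xv, Xv² ≤ η² D S2 get Xv ≤ 2/K η² S2
      have hDle : D ≤ 2 / K * Xv := by
        rw [show 2 / K * Xv = 2 * Xv / K by ring, le_div_iff₀ hK]
        linarith [hs']
      have h7 : Xv^2 ≤ (η ℓ)^2 * (2 / K * Xv * S2) := by
        calc Xv^2 ≤ (η ℓ)^2 * (D * S2) := hX2
        _ ≤ (η ℓ)^2 * (2 / K * Xv * S2) := by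
            apply mul_le_mul_of_nonneg_left _ (sq_nonneg _)
            exact mul_le_mul_of_nonneg_right hDle hS20
      have h8 : Xv * Xv ≤ (2 / K * (η ℓ)^2 * S2) * Xv := by
        calc Xv * Xv = Xv^2 := by ring
        _ ≤ (η ℓ)^2 * (2 / K * Xv * S2) := h7
        _ = (2 / K * (η ℓ)^2 * S2) * Xv := by ring
      exact le_of_mul_le_mul_right h8 hX0'
  -- combine
  have hl := hleader k θ hθ
  have hsplit : ∑ ℓ ∈ Finset.Icc 1 k, η ℓ * ∑ p, (θ p - ρ ℓ p) * R ℓ p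
      = (∑ ℓ ∈ Finset.Icc 1 k, η ℓ * ∑ p, θ p * R ℓ p)
        - ∑ ℓ ∈ Finset.Icc 1 k, η ℓ * ∑ p, ρ ℓ p * R ℓ p := by
    rw [← Finset.sum_sub_distrib]
    refine Finset.sum_congr rfl fun ℓ _ => ?_
    rw [← mul_sub, ← Finset.sum_sub_distrib]
    congr 1
    exact Finset.sum_congr rfl fun p _ => by ring
  have hdiff : (∑ ℓ ∈ Finset.Icc 1 k, η ℓ * ∑ p, ρ (ℓ + 1) p * R ℓ p)
      - ∑ ℓ ∈ Finset.Icc 1 k, η ℓ * ∑ p, ρ ℓ p * R ℓ p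
      ≤ ∑ ℓ ∈ Finset.Icc 1 k, 2 / K * (η ℓ)^2 * ∑ p, (R ℓ p)^2 := by
    rw [← Finset.sum_sub_distrib]
    apply Finset.sum_le_sum
    intro ℓ hℓ
    have hℓ1 : 1 ≤ ℓ := (Finset.mem_Icc.1 hℓ).1
    have := hstep ℓ hℓ1
    calc η ℓ * ∑ p, ρ (ℓ + 1) p * R ℓ p - η ℓ * ∑ p, ρ ℓ p * R ℓ p
        = η ℓ * ∑ p, (ρ (ℓ + 1) p - ρ ℓ p) * R ℓ p := by
          rw [← mul_sub, ← Finset.sum_sub_distrib]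
          congr 1
          exact Finset.sum_congr rfl fun p _ => by ring
      _ ≤ 2 / K * (η ℓ)^2 * ∑ p, (R ℓ p)^2 := this
  rw [hsplit]
  linarith [hl, hdiff]

end FTL

section Game
variable {n : ℕ} {S A : Fin n → Type*} [∀ j, Fintype (S j)] [∀ j, Fintype (A j)]

lemma prod_update (ρ : ∀ j, S j × A j → ℝ) (i : Fin n) (x : (S i × A i) → ℝ)
    (s : ∀ j, S j) (a : ∀ j, A j) :
    ∏ j, (Function.update ρ i x) j (s j, a j)
      = x (s i, a i) * ∏ j ∈ Finset.univ.erase i, ρ j (s j, a j) := by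
  rw [← Finset.mul_prod_erase Finset.univ (fun j => (Function.update ρ i x) j (s j, a j))
    (Finset.mem_univ i)]
  congr 1
  · rw [Function.update_self]
  · exact Finset.prod_congr rfl fun j hj => by
      rw [Function.update_of_ne (Finset.ne_of_mem_erase hj)]

lemma payoff_update (ri : (∀ j, S j) → (∀ j, A j) → ℝ) (ρ : ∀ j, S j × A j → ℝ)
    (i : Fin n) (x : (S i × A i) → ℝ) :
    payoff ri (Function.update ρ i x) = ∑ p, x p * ownGrad ri i ρ p := by
  classical
  have key : ∀ (y : (S i × A i) → ℝ), payoff ri (Function.update ρ i y)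
      = ∑ s, ∑ a, y (s i, a i) * ((∏ j ∈ Finset.univ.erase i, ρ j (s j, a j)) * ri s a) := by
    intro y
    simp only [payoff]
    refine Finset.sum_congr rfl fun s _ => Finset.sum_congr rfl fun a _ => ?_
    rw [prod_update]; ring
  rw [key x]
  have hG : ∀ p, ownGrad ri i ρ p = ∑ s, ∑ a,
      (if (s i, a i) = p then (1:ℝ) else 0)
        * ((∏ j ∈ Finset.univ.erase i, ρ j (s j, a j)) * ri s a) := by
    intro p
    rw [ownGrad, key]
  calc ∑ s, ∑ a, x (s i, a i) * ((∏ j ∈ Finset.univ.erase i, ρ j (s j, a j)) * ri s a)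
      = ∑ s, ∑ a, ∑ p, x p * ((if (s i, a i) = p then (1:ℝ) else 0)
          * ((∏ j ∈ Finset.univ.erase i, ρ j (s j, a j)) * ri s a)) := by
        refine Finset.sum_congr rfl fun s _ => Finset.sum_congr rfl fun a _ => ?_
        have hid : ∀ p ∈ Finset.univ, x p * ((if (s i, a i) = p then (1:ℝ) else 0)
            * ((∏ j ∈ Finset.univ.erase i, ρ j (s j, a j)) * ri s a))
            = if (s i, a i) = p
              then x p * ((∏ j ∈ Finset.univ.erase i, ρ j (s j, a j)) * ri s a) else 0 := by
          intro p _
          by_cases hp : (s i, a i) = p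
          · simp [hp]
          · simp [hp]
        rw [Finset.sum_congr rfl hid, Finset.sum_ite_eq]
        simp
    _ = ∑ s, ∑ p, ∑ a, x p * ((if (s i, a i) = p then (1:ℝ) else 0)
          * ((∏ j ∈ Finset.univ.erase i, ρ j (s j, a j)) * ri s a)) :=
        Finset.sum_congr rfl fun s _ => Finset.sum_comm
    _ = ∑ p, ∑ s, ∑ a, x p * ((if (s i, a i) = p then (1:ℝ) else 0)
          * ((∏ j ∈ Finset.univ.erase i, ρ j (s j, a j)) * ri s a)) :=
        Finset.sum_comm
    _ = ∑ p, x p * ownGrad ri i ρ p := by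
        refine Finset.sum_congr rfl fun p _ => ?_
        rw [hG p, Finset.mul_sum]
        exact Finset.sum_congr rfl fun s _ => by rw [Finset.mul_sum]
    

lemma payoff_self (ri : (∀ j, S j) → (∀ j, A j) → ℝ) (ρ : ∀ j, S j × A j → ℝ) (i : Fin n) :
    payoff ri ρ = ∑ p, ρ i p * ownGrad ri i ρ p := by
  conv_lhs => rw [← Function.update_eq_self i ρ]
  exact payoff_update ri ρ i (ρ i)

lemma NI_eq (r : ∀ _ : Fin n, (∀ j, S j) → (∀ j, A j) → ℝ) (θ ρ : ∀ j, S j × A j → ℝ) :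
    NI r θ ρ = ∑ i, ∑ p, (θ i p - ρ i p) * ownGrad (r i) i ρ p := by
  unfold NI
  refine Finset.sum_congr rfl fun i _ => ?_
  rw [payoff_update (r i) ρ i (θ i), payoff_self (r i) ρ i, ← Finset.sum_sub_distrib]
  exact Finset.sum_congr rfl fun p _ => by ring

lemma sum_sum_prod (f : ∀ j, (S j × A j) → ℝ) :
    ∑ s : ∀ j, S j, ∑ a : ∀ j, A j, ∏ j, f j (s j, a j) = ∏ j, ∑ q : S j × A j, f j q := by
  classical
  have h1 : ∀ s : ∀ j, S j, ∑ a : ∀ j, A j, ∏ j, f j (s j, a j)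
      = ∏ j, ∑ v : A j, f j (s j, v) := by
    intro s
    rw [Finset.prod_univ_sum, Fintype.piFinset_univ]
  rw [Finset.sum_congr rfl fun s _ => h1 s]
  rw [show ∑ s : ∀ j, S j, ∏ j, ∑ v : A j, f j (s j, v)
      = ∏ j, ∑ u : S j, ∑ v : A j, f j (u, v) by
    rw [Finset.prod_univ_sum, Fintype.piFinset_univ]]
  exact Finset.prod_congr rfl fun j _ => (Fintype.sum_prod_type _).symm

lemma ownGrad_nonneg (ri : (∀ j, S j) → (∀ j, A j) → ℝ)
    (hri : ∀ s a, ri s a ∈ Set.Icc (0:ℝ) 1) (i : Fin n) (ρ : ∀ j, S j × A j → ℝ)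
    (hρ : ∀ j, ρ j ∈ probSimplex (S j × A j)) (p : S i × A i) :
    0 ≤ ownGrad ri i ρ p := by
  classical
  unfold ownGrad payoff
  refine Finset.sum_nonneg fun s _ => Finset.sum_nonneg fun a _ => mul_nonneg ?_ (hri s a).1
  refine Finset.prod_nonneg fun j _ => ?_
  by_cases hj : j = i
  · subst hj
    rw [Function.update_self]
    positivity
  · rw [Function.update_of_ne hj]
    exact (hρ j).1 _

lemma ownGrad_le_one (ri : (∀ j, S j) → (∀ j, A j) → ℝ)
    (hri : ∀ s a, ri s a ∈ Set.Icc (0:ℝ) 1) (i : Fin n) (ρ : ∀ j, S j × A j → ℝ)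
    (hρ : ∀ j, ρ j ∈ probSimplex (S j × A j)) (p : S i × A i) :
    ownGrad ri i ρ p ≤ 1 := by
  classical
  unfold ownGrad payoff
  set f : ∀ j, (S j × A j) → ℝ :=
    Function.update ρ i (fun q => if q = p then (1:ℝ) else 0) with hf
  have hfnn : ∀ j q, 0 ≤ f j q := by
    intro j q
    by_cases hj : j = i
    · subst hj; rw [hf, Function.update_self]; positivity
    · rw [hf, Function.update_of_ne hj]; exact (hρ j).1 q
  have step1 : ∑ s : ∀ j, S j, ∑ a : ∀ j, A j, (∏ j, f j (s j, a j)) * ri s a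
      ≤ ∑ s : ∀ j, S j, ∑ a : ∀ j, A j, ∏ j, f j (s j, a j) := by
    refine Finset.sum_le_sum fun s _ => Finset.sum_le_sum fun a _ => ?_
    have hprod : 0 ≤ ∏ j, f j (s j, a j) := Finset.prod_nonneg fun j _ => hfnn j _
    calc (∏ j, f j (s j, a j)) * ri s a ≤ (∏ j, f j (s j, a j)) * 1 :=
          mul_le_mul_of_nonneg_left (hri s a).2 hprod
      _ = ∏ j, f j (s j, a j) := mul_one _
  refine le_trans step1 ?_
  rw [sum_sum_prod f]
  have : ∀ j, ∑ q : S j × A j, f j q = 1 := by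
    intro j
    by_cases hj : j = i
    · subst hj
      rw [hf, Function.update_self]
      rw [Finset.sum_ite_eq' Finset.univ p (fun _ => (1:ℝ))]
      simp
    · rw [hf, Function.update_of_ne hj]
      exact (hρ j).2
  rw [Finset.prod_congr rfl fun j _ => this j]
  simp

end Game

variable {Ω : Type*} {m0 : MeasurableSpace Ω} {μ : Measure Ω} [IsProbabilityMeasure μ]

/-- product of two L² functions is integrable -/
lemma l2_mul_integrable {f g : Ω → ℝ} (hf : MemLp f 2 μ) (hg : MemLp g 2 μ) :
    Integrable (fun ω => f ω * g ω) μ := by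
  have : MemLp (g • f) 1 μ := MemLp.smul (hpqr := ⟨by simp only [inv_one]; exact ENNReal.inv_two_add_inv_two⟩) hf hg
  have h2 : (fun ω => f ω * g ω) = g • f := by
    funext ω; simp [mul_comm]
  rw [h2]
  exact this.integrable le_rfl

/-- A.s. convergence of the weighted noise sums. -/
lemma noise_mart_conv (F : Filtration ℕ m0)
    (g c : ℕ → Ω → ℝ) (η : ℕ → ℝ) (B C : ℝ) (hB : 0 ≤ B)
    (hgmeas : ∀ k, 1 ≤ k → Measurable[F k] (g k))
    (hgsq : ∀ k, 1 ≤ k → Integrable (fun ω => (g k ω)^2) μ)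
    (hgsqbd : ∀ k, 1 ≤ k → ∫ ω, (g k ω)^2 ∂μ ≤ B)
    (hgc : ∀ k, 1 ≤ k → ∀ᵐ ω ∂μ, |(μ[g k | F (k-1)]) ω| ≤ C)
    (hcmeas : ∀ k, 1 ≤ k → StronglyMeasurable[F (k-1)] (c k))
    (hcbd : ∀ k, 1 ≤ k → ∀ ω, |c k ω| ≤ 1)
    (hsq : Summable fun ℓ => (η ℓ)^2) :
    ∀ᵐ ω ∂μ, ∃ L : ℝ, Tendsto
      (fun k => ∑ ℓ ∈ Finset.Icc 1 k, η ℓ * c ℓ ω * (g ℓ ω - (μ[g ℓ | F (ℓ-1)]) ω))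
      atTop (𝓝 L) := by
  set ξ : ℕ → Ω → ℝ := fun ℓ ω => g ℓ ω - (μ[g ℓ | F (ℓ-1)]) ω with hξ
  set d : ℕ → Ω → ℝ := fun ℓ ω => η ℓ * c ℓ ω * ξ ℓ ω with hd
  set M : ℕ → Ω → ℝ := fun k ω => ∑ ℓ ∈ Finset.Icc 1 k, d ℓ ω with hM
  -- basic measurability / integrability facts
  have hgsm : ∀ ℓ, 1 ≤ ℓ → StronglyMeasurable[F ℓ] (g ℓ) :=
    fun ℓ hℓ => (hgmeas ℓ hℓ).stronglyMeasurable
  have hgaesm : ∀ ℓ, 1 ≤ ℓ → AEStronglyMeasurable (g ℓ) μ :=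
    fun ℓ hℓ => ((hgsm ℓ hℓ).mono (F.le ℓ)).aestronglyMeasurable
  have hgl2 : ∀ ℓ, 1 ≤ ℓ → MemLp (g ℓ) 2 μ := fun ℓ hℓ =>
    (memLp_two_iff_integrable_sq (hgaesm ℓ hℓ)).2 (by
      have := hgsq ℓ hℓ
      simpa [pow_two] using this)
  have hEgl2 : ∀ ℓ, 1 ≤ ℓ → MemLp (μ[g ℓ | F (ℓ-1)]) 2 μ := fun ℓ hℓ =>
    MemLp.of_bound ((stronglyMeasurable_condExp.mono (F.le (ℓ-1))).aestronglyMeasurable) C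
      (by filter_upwards [hgc ℓ hℓ] with ω hω; simpa [Real.norm_eq_abs] using hω)
  have hξl2 : ∀ ℓ, 1 ≤ ℓ → MemLp (ξ ℓ) 2 μ := fun ℓ hℓ =>
    (hgl2 ℓ hℓ).sub (hEgl2 ℓ hℓ)
  have hξsm : ∀ ℓ, 1 ≤ ℓ → StronglyMeasurable[F ℓ] (ξ ℓ) := by
    intro ℓ hℓ
    exact (hgsm ℓ hℓ).sub (stronglyMeasurable_condExp.mono (F.mono (Nat.sub_le ℓ 1)))
  have hcsm : ∀ ℓ, 1 ≤ ℓ → StronglyMeasurable[F ℓ] (c ℓ) :=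
    fun ℓ hℓ => (hcmeas ℓ hℓ).mono (F.mono (Nat.sub_le ℓ 1))
  have hdsm : ∀ ℓ, 1 ≤ ℓ → StronglyMeasurable[F ℓ] (d ℓ) := by
    intro ℓ hℓ
    exact (stronglyMeasurable_const.mul (hcsm ℓ hℓ)).mul (hξsm ℓ hℓ)
  have hdl2 : ∀ ℓ, 1 ≤ ℓ → MemLp (d ℓ) 2 μ := by
    intro ℓ hℓ
    refine MemLp.of_le ((hξl2 ℓ hℓ).const_mul (η ℓ))
      ((hdsm ℓ hℓ).mono (F.le ℓ)).aestronglyMeasurable ?_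
    refine Eventually.of_forall fun ω => ?_
    simp only [Real.norm_eq_abs, hd, abs_mul]
    have := hcbd ℓ hℓ ω
    have h0 : 0 ≤ |η ℓ| * |ξ ℓ ω| := by positivity
    calc |η ℓ| * |c ℓ ω| * |ξ ℓ ω| ≤ |η ℓ| * 1 * |ξ ℓ ω| := by
          apply mul_le_mul_of_nonneg_right _ (abs_nonneg _)
          exact mul_le_mul_of_nonneg_left this (abs_nonneg _)
      _ = |η ℓ| * |ξ ℓ ω| := by rw [mul_one]
  have hdint : ∀ ℓ, 1 ≤ ℓ → Integrable (d ℓ) μ :=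
    fun ℓ hℓ => (hdl2 ℓ hℓ).integrable one_le_two
  have hMl2 : ∀ k, MemLp (M k) 2 μ := by
    intro k
    have h1 := memLp_finsetSum' (μ := μ) (p := 2) (Finset.Icc 1 k)
      (f := d) (fun ℓ hℓ => hdl2 ℓ (Finset.mem_Icc.1 hℓ).1)
    have heq : M k = ∑ i ∈ Finset.Icc 1 k, d i := by
      funext ω; simp [hM, Finset.sum_apply]
    rw [heq]
    exact h1
  have hMint : ∀ k, Integrable (M k) μ := fun k => (hMl2 k).integrable one_le_two
  have hadp : ∀ k, StronglyMeasurable[F k] (M k) := by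
    intro k
    apply Finset.stronglyMeasurable_fun_sum
    intro ℓ hℓ
    exact (hdsm ℓ (Finset.mem_Icc.1 hℓ).1).mono (F.mono (Finset.mem_Icc.1 hℓ).2)
  -- conditional expectation of increments vanishes
  have hd0 : ∀ n : ℕ, μ[d (n+1) | F n] =ᵐ[μ] 0 := by
    intro n
    have hn1 : 1 ≤ n + 1 := Nat.le_add_left 1 n
    have hsub : (n + 1) - 1 = n := rfl
    have hξ0 : μ[ξ (n+1) | F n] =ᵐ[μ] 0 := by
      have h1 : μ[ξ (n+1) | F n]
          =ᵐ[μ] μ[g (n+1) | F n] - μ[μ[g (n+1) | F ((n+1)-1)] | F n] :=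
        condExp_sub ((hgl2 _ hn1).integrable one_le_two) integrable_condExp _
      have h2 : μ[μ[g (n+1) | F ((n+1)-1)] | F n] = μ[g (n+1) | F n] := by
        rw [hsub]
        exact condExp_of_stronglyMeasurable (F.le n) stronglyMeasurable_condExp
          integrable_condExp
      filter_upwards [h1] with ω hω
      rw [Pi.zero_apply]
      rw [hω, h2]
      simp [hsub]
    have hpull : μ[(fun ω => (η (n+1) * c (n+1) ω)) * ξ (n+1) | F n]
        =ᵐ[μ] (fun ω => (η (n+1) * c (n+1) ω)) * μ[ξ (n+1) | F n] := by
      apply condExp_mul_of_stronglyMeasurable_left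
      · have := hcmeas (n+1) hn1
        rw [hsub] at this
        exact stronglyMeasurable_const.mul this
      · have : ((fun ω => η (n+1) * c (n+1) ω) * ξ (n+1)) = d (n+1) := by
          funext ω; simp [hd, mul_assoc]
        rw [this]
        exact hdint _ hn1
      · exact (hξl2 _ hn1).integrable one_le_two
    have hdeq : d (n+1) = (fun ω => (η (n+1) * c (n+1) ω)) * ξ (n+1) := by
      funext ω; simp [hd, mul_assoc]
    rw [hdeq]
    refine hpull.trans ?_
    filter_upwards [hξ0] with ω hω
    simp only [Pi.mul_apply, Pi.zero_apply] at hω ⊢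
    rw [hω, mul_zero]
  -- martingale property
  have hMrec : ∀ n, M (n+1) = fun ω => M n ω + d (n+1) ω := by
    intro n
    funext ω
    simp only [hM]
    rw [Finset.sum_Icc_succ_top (Nat.le_add_left 1 n)]
  have hmart : Martingale M F μ := by
    apply martingale_nat hadp hMint
    intro n
    have h1 : μ[M (n+1) | F n] =ᵐ[μ] μ[M n | F n] + μ[d (n+1) | F n] := by
      have : M (n+1) = M n + d (n+1) := by
        rw [hMrec n]; rfl
      rw [this]
      exact condExp_add (hMint n) (hdint _ (Nat.le_add_left 1 n)) _
    have h2 : μ[M n | F n] = M n :=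
      condExp_of_stronglyMeasurable (F.le n) (hadp n) (hMint n)
    refine EventuallyEq.symm (h1.trans ?_)
    filter_upwards [hd0 n] with ω hω
    simp only [Pi.add_apply, h2, hω, Pi.zero_apply, add_zero]
  -- second moments
  set D : ℝ := 2*B + 2*C^2 with hD2
  have hξsq_int : ∀ ℓ, 1 ≤ ℓ → Integrable (fun ω => (ξ ℓ ω)^2) μ := by
    intro ℓ hℓ
    have := (memLp_two_iff_integrable_sq ((hξl2 ℓ hℓ).aestronglyMeasurable)).1 (hξl2 ℓ hℓ)
    simpa [pow_two] using this
  have hEgsq_int : ∀ ℓ, 1 ≤ ℓ → Integrable (fun ω => ((μ[g ℓ | F (ℓ-1)]) ω)^2) μ := by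
    intro ℓ hℓ
    have := (memLp_two_iff_integrable_sq ((hEgl2 ℓ hℓ).aestronglyMeasurable)).1 (hEgl2 ℓ hℓ)
    simpa [pow_two] using this
  have hξsqbd : ∀ ℓ, 1 ≤ ℓ → ∫ ω, (ξ ℓ ω)^2 ∂μ ≤ D := by
    intro ℓ hℓ
    have hEgbd : ∫ ω, ((μ[g ℓ | F (ℓ-1)]) ω)^2 ∂μ ≤ C^2 := by
      have hae : ∀ᵐ ω ∂μ, ((μ[g ℓ | F (ℓ-1)]) ω)^2 ≤ C^2 := by
        filter_upwards [hgc ℓ hℓ] with ω hω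
        have h0 : (0:ℝ) ≤ C := le_trans (abs_nonneg _) hω
        nlinarith [abs_nonneg ((μ[g ℓ | F (ℓ-1)]) ω), sq_abs ((μ[g ℓ | F (ℓ-1)]) ω)]
      calc ∫ ω, ((μ[g ℓ | F (ℓ-1)]) ω)^2 ∂μ ≤ ∫ _ω, C^2 ∂μ :=
            integral_mono_ae (hEgsq_int ℓ hℓ) (integrable_const _) hae
        _ = C^2 := by simp
    have hpt : ∀ ω, (ξ ℓ ω)^2 ≤ 2*(g ℓ ω)^2 + 2*((μ[g ℓ | F (ℓ-1)]) ω)^2 := by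
      intro ω
      simp only [hξ]
      nlinarith [sq_nonneg (g ℓ ω + (μ[g ℓ | F (ℓ-1)]) ω)]
    calc ∫ ω, (ξ ℓ ω)^2 ∂μ
        ≤ ∫ ω, (2*(g ℓ ω)^2 + 2*((μ[g ℓ | F (ℓ-1)]) ω)^2) ∂μ :=
          integral_mono (hξsq_int ℓ hℓ)
            (((hgsq ℓ hℓ).const_mul 2).add ((hEgsq_int ℓ hℓ).const_mul 2)) hpt
      _ = 2 * (∫ ω, (g ℓ ω)^2 ∂μ) + 2 * ∫ ω, ((μ[g ℓ | F (ℓ-1)]) ω)^2 ∂μ := by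
          rw [integral_add ((hgsq ℓ hℓ).const_mul 2) ((hEgsq_int ℓ hℓ).const_mul 2),
            integral_const_mul, integral_const_mul]
      _ ≤ D := by
          rw [hD2]
          have := hgsqbd ℓ hℓ
          linarith [hEgbd]
  have hM2int : ∀ k, Integrable (fun ω => (M k ω)^2) μ := by
    intro k
    have := (memLp_two_iff_integrable_sq ((hMl2 k).aestronglyMeasurable)).1 (hMl2 k)
    simpa [pow_two] using this
  have hd2int : ∀ ℓ, 1 ≤ ℓ → Integrable (fun ω => (d ℓ ω)^2) μ := by
    intro ℓ hℓ
    have := (memLp_two_iff_integrable_sq ((hdl2 ℓ hℓ).aestronglyMeasurable)).1 (hdl2 ℓ hℓ)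
    simpa [pow_two] using this
  -- cross terms vanish
  have hcross : ∀ n, ∫ ω, M n ω * d (n+1) ω ∂μ = 0 := by
    intro n
    have hn1 : 1 ≤ n + 1 := Nat.le_add_left 1 n
    have hint : Integrable (fun ω => M n ω * d (n+1) ω) μ :=
      l2_mul_integrable (hMl2 n) (hdl2 _ hn1)
    have hint' : Integrable (M n * d (n+1)) μ := by
      have : (M n * d (n+1)) = fun ω => M n ω * d (n+1) ω := rfl
      rw [this]; exact hint
    have hpull : μ[(M n * d (n+1)) | F n] =ᵐ[μ] M n * μ[d (n+1) | F n] :=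
      condExp_mul_of_stronglyMeasurable_left (hadp n) hint' (hdint _ hn1)
    have hzero : μ[(M n * d (n+1)) | F n] =ᵐ[μ] 0 := by
      refine hpull.trans ?_
      filter_upwards [hd0 n] with ω hω
      simp only [Pi.mul_apply, hω, Pi.zero_apply, mul_zero]
    calc ∫ ω, M n ω * d (n+1) ω ∂μ = ∫ ω, (μ[(M n * d (n+1)) | F n]) ω ∂μ :=
          (integral_condExp (F.le n) (f := M n * d (n+1))).symm
      _ = ∫ _ω, (0:ℝ) ∂μ := integral_congr_ae hzero
      _ = 0 := integral_zero _ _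
  -- L² bound by induction
  have hMsq : ∀ k, ∫ ω, (M k ω)^2 ∂μ ≤ ∑ ℓ ∈ Finset.Icc 1 k, (η ℓ)^2 * D := by
    intro k
    induction k with
    | zero =>
      have : ∀ ω, M 0 ω = 0 := by intro ω; simp [hM]
      simp [this]
    | succ n ih =>
      have hn1 : 1 ≤ n + 1 := Nat.le_add_left 1 n
      have hd2 : ∫ ω, (d (n+1) ω)^2 ∂μ ≤ (η (n+1))^2 * D := by
        have hpt : ∀ ω, (d (n+1) ω)^2 ≤ (η (n+1))^2 * (ξ (n+1) ω)^2 := by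
          intro ω
          have h1 := hcbd (n+1) hn1 ω
          have h2 : (0:ℝ) ≤ |c (n+1) ω| := abs_nonneg _
          simp only [hd]
          have h3 : (c (n+1) ω)^2 ≤ 1 := by
            nlinarith [sq_abs (c (n+1) ω), abs_nonneg (c (n+1) ω)]
          nlinarith [mul_le_mul_of_nonneg_left h3
            (mul_nonneg (sq_nonneg (η (n+1))) (sq_nonneg (ξ (n+1) ω)))]
        calc ∫ ω, (d (n+1) ω)^2 ∂μ ≤ ∫ ω, (η (n+1))^2 * (ξ (n+1) ω)^2 ∂μ :=
              integral_mono (hd2int _ hn1) ((hξsq_int _ hn1).const_mul _) hpt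
          _ = (η (n+1))^2 * ∫ ω, (ξ (n+1) ω)^2 ∂μ := integral_const_mul _ _
          _ ≤ (η (n+1))^2 * D := mul_le_mul_of_nonneg_left (hξsqbd _ hn1) (sq_nonneg _)
      have hexp : ∫ ω, (M (n+1) ω)^2 ∂μ
          = ∫ ω, (M n ω)^2 ∂μ + 2 * ∫ ω, M n ω * d (n+1) ω ∂μ
            + ∫ ω, (d (n+1) ω)^2 ∂μ := by
        have hpt : (fun ω => (M (n+1) ω)^2)
            = fun ω => (M n ω)^2 + 2 * (M n ω * d (n+1) ω) + (d (n+1) ω)^2 := by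
          funext ω
          rw [hMrec n]
          ring
        have hintm : Integrable (fun ω => 2 * (M n ω * d (n+1) ω)) μ :=
          (l2_mul_integrable (hMl2 n) (hdl2 _ hn1)).const_mul 2
        have hintA : Integrable (fun ω => (M n ω)^2 + 2 * (M n ω * d (n+1) ω)) μ :=
          (hM2int n).add hintm
        rw [hpt, integral_add hintA (hd2int _ hn1), integral_add (hM2int n) hintm,
          integral_const_mul]
      rw [Finset.sum_Icc_succ_top hn1]
      rw [hexp, hcross n]
      linarith [ih, hd2]
  -- uniform L¹ bound
  set V : ℝ := D * (∑' ℓ, (η ℓ)^2) with hV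
  have hDnn : (0:ℝ) ≤ D := by nlinarith [hB, sq_nonneg C]
  have hVk : ∀ k, ∑ ℓ ∈ Finset.Icc 1 k, (η ℓ)^2 * D ≤ V := by
    intro k
    calc ∑ ℓ ∈ Finset.Icc 1 k, (η ℓ)^2 * D = (∑ ℓ ∈ Finset.Icc 1 k, (η ℓ)^2) * D := by
          rw [Finset.sum_mul]
      _ ≤ (∑' ℓ, (η ℓ)^2) * D := by
          apply mul_le_mul_of_nonneg_right _ hDnn
          exact Summable.sum_le_tsum _ (fun _ _ => sq_nonneg _) hsq
      _ = V := by rw [hV, mul_comm]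
  have hL1 : ∀ k, ∫ ω, |M k ω| ∂μ ≤ (1 + V)/2 := by
    intro k
    have h1 : ∀ ω, |M k ω| ≤ (1 + (M k ω)^2)/2 := by
      intro ω
      nlinarith [sq_nonneg (|M k ω| - 1), abs_nonneg (M k ω), sq_abs (M k ω)]
    calc ∫ ω, |M k ω| ∂μ ≤ ∫ ω, (1 + (M k ω)^2)/2 ∂μ :=
          integral_mono (hMint k).abs (((integrable_const 1).add (hM2int k)).div_const 2) h1
      _ = (1 + ∫ ω, (M k ω)^2 ∂μ)/2 := by
          rw [integral_div, integral_add (integrable_const 1) (hM2int k)]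
          simp
      _ ≤ (1 + V)/2 := by linarith [le_trans (hMsq k) (hVk k)]
  have hbdd : ∀ k, eLpNorm (M k) 1 μ ≤ ((((1+V)/2).toNNReal : ℝ≥0) : ℝ≥0∞) := by
    intro k
    have h1 : eLpNorm (M k) 1 μ = ENNReal.ofReal (∫ ω, ‖M k ω‖ ∂μ) := by
      rw [eLpNorm_one_eq_lintegral_enorm, ← ofReal_integral_norm_eq_lintegral_enorm (hMint k)]
    have h2 : ((((1+V)/2).toNNReal : ℝ≥0) : ℝ≥0∞) = ENNReal.ofReal ((1+V)/2) := rfl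
    rw [h1, h2]
    apply ENNReal.ofReal_le_ofReal
    simpa [Real.norm_eq_abs] using hL1 k
  have hconvas := (hmart.submartingale).exists_ae_tendsto_of_bdd hbdd
  filter_upwards [hconvas] with ω hω
  obtain ⟨L, hL⟩ := hω
  exact ⟨L, hL⟩

/-- a.s. summability from summable integral bounds -/
lemma as_summable (f : ℕ → Ω → ℝ) (b : ℕ → ℝ) (hnn : ∀ k ω, 0 ≤ f k ω)
    (hint : ∀ k, Integrable (f k) μ) (hb : ∀ k, ∫ ω, f k ω ∂μ ≤ b k) (hsb : Summable b) :
    ∀ᵐ ω ∂μ, Summable (fun k => f k ω) := by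
  have hbnn : ∀ k, 0 ≤ b k := fun k =>
    le_trans (integral_nonneg (fun ω => hnn k ω)) (hb k)
  have hmeas : ∀ k, AEMeasurable (fun ω => ENNReal.ofReal (f k ω)) μ :=
    fun k => (hint k).aemeasurable.ennreal_ofReal
  have h1 : ∀ k, ∫⁻ ω, ENNReal.ofReal (f k ω) ∂μ ≤ ENNReal.ofReal (b k) := by
    intro k
    rw [← ofReal_integral_eq_lintegral_ofReal (hint k) (Eventually.of_forall (hnn k))]
    exact ENNReal.ofReal_le_ofReal (hb k)
  have h2 : ∫⁻ ω, ∑' k, ENNReal.ofReal (f k ω) ∂μ ≠ ⊤ := by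
    rw [lintegral_tsum hmeas]
    apply ne_of_lt
    calc ∑' k, ∫⁻ ω, ENNReal.ofReal (f k ω) ∂μ ≤ ∑' k, ENNReal.ofReal (b k) :=
          ENNReal.tsum_le_tsum h1
      _ = ENNReal.ofReal (∑' k, b k) := (ENNReal.ofReal_tsum_of_nonneg hbnn hsb).symm
      _ < ⊤ := ENNReal.ofReal_lt_top
  have h3 := ae_lt_top' (AEMeasurable.ennreal_tsum hmeas) h2
  filter_upwards [h3] with ω hω
  have h4 : Summable (fun k => (ENNReal.ofReal (f k ω)).toReal) :=
    ENNReal.summable_toReal (ne_of_lt hω)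
  refine h4.congr fun k => ?_
  rw [ENNReal.toReal_ofReal (hnn k ω)]

/-- deterministic per-ω bound -/
lemma key_bound {n : ℕ} {S A : Fin n → Type*} [∀ j, Fintype (S j)] [∀ j, Fintype (A j)]
    (r : ∀ _ : Fin n, (∀ j, S j) → (∀ j, A j) → ℝ)
    (Pδ : ∀ i : Fin n, Set ((S i × A i) → ℝ))
    (hsub : ∀ i, Pδ i ⊆ probSimplex (S i × A i))
    (η : ℕ → ℝ) (hη : ∀ k, 0 < η k) (K : ℝ)
    (Rw : ℕ → ∀ i : Fin n, (S i × A i) → ℝ)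
    (ρw : ℕ → ∀ j, S j × A j → ℝ)
    (hρmem : ∀ ℓ, 1 ≤ ℓ → ∀ j, ρw ℓ j ∈ Pδ j)
    (Eg : ℕ → ∀ i : Fin n, (S i × A i) → ℝ)
    (β : ℝ) (hβ0 : 0 ≤ β)
    (hbias : ∀ ℓ, 1 ≤ ℓ → ∀ i p, |Eg ℓ i p - ownGrad (r i) i (ρw ℓ) p| ≤ β)
    (C : Fin n → ℝ)
    (hftl : ∀ i : Fin n, ∀ k, ∀ θi ∈ Pδ i,
      ∑ ℓ ∈ Finset.Icc 1 k, η ℓ * ∑ p, (θi p - ρw ℓ i p) * Rw ℓ i p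
        ≤ C i + ∑ ℓ ∈ Finset.Icc 1 k, 2 / K * (η ℓ)^2 * ∑ p, (Rw ℓ i p)^2)
    (k : ℕ) (θ : ∀ j, S j × A j → ℝ) (hθ : ∀ i, θ i ∈ Pδ i) :
    ∑ ℓ ∈ Finset.Icc 1 k, η ℓ * NI r θ (ρw ℓ)
      ≤ (∑ i, C i)
        + (∑ i, ∑ ℓ ∈ Finset.Icc 1 k, 2 / K * (η ℓ)^2 * ∑ p, (Rw ℓ i p)^2)
        + 2 * n * β * (∑ ℓ ∈ Finset.Icc 1 k, η ℓ)
        + ∑ i, ∑ p, (|∑ ℓ ∈ Finset.Icc 1 k, η ℓ * (Rw ℓ i p - Eg ℓ i p)|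
            + |∑ ℓ ∈ Finset.Icc 1 k, η ℓ * ρw ℓ i p * (Rw ℓ i p - Eg ℓ i p)|) := by
  -- simplex facts
  have hsimp : ∀ ℓ, 1 ≤ ℓ → ∀ j, ρw ℓ j ∈ probSimplex (S j × A j) :=
    fun ℓ hℓ j => hsub j (hρmem ℓ hℓ j)
  have hθsimp : ∀ i, θ i ∈ probSimplex (S i × A i) := fun i => hsub i (hθ i)
  -- rewrite NI and swap sums
  have h1 : ∑ ℓ ∈ Finset.Icc 1 k, η ℓ * NI r θ (ρw ℓ)
      = ∑ i, ∑ ℓ ∈ Finset.Icc 1 k, η ℓ * ∑ p, (θ i p - ρw ℓ i p) * ownGrad (r i) i (ρw ℓ) p := by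
    rw [Finset.sum_comm]
    refine Finset.sum_congr rfl fun ℓ _ => ?_
    rw [NI_eq, Finset.mul_sum]
  rw [h1]
  have key : ∀ i : Fin n, ∑ ℓ ∈ Finset.Icc 1 k, η ℓ * ∑ p, (θ i p - ρw ℓ i p) * ownGrad (r i) i (ρw ℓ) p
      ≤ C i + (∑ ℓ ∈ Finset.Icc 1 k, 2 / K * (η ℓ)^2 * ∑ p, (Rw ℓ i p)^2)
        + 2 * β * (∑ ℓ ∈ Finset.Icc 1 k, η ℓ)
        + ∑ p, (|∑ ℓ ∈ Finset.Icc 1 k, η ℓ * (Rw ℓ i p - Eg ℓ i p)|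
            + |∑ ℓ ∈ Finset.Icc 1 k, η ℓ * ρw ℓ i p * (Rw ℓ i p - Eg ℓ i p)|) := by
    intro i
    -- decompose v = R + (Eg - R) + (v - Eg)
    have hdec : ∀ ℓ ∈ Finset.Icc 1 k, η ℓ * ∑ p, (θ i p - ρw ℓ i p) * ownGrad (r i) i (ρw ℓ) p
        = η ℓ * ∑ p, (θ i p - ρw ℓ i p) * Rw ℓ i p
          + η ℓ * ∑ p, (θ i p - ρw ℓ i p) * (Eg ℓ i p - Rw ℓ i p)
          + η ℓ * ∑ p, (θ i p - ρw ℓ i p) * (ownGrad (r i) i (ρw ℓ) p - Eg ℓ i p) := by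
      intro ℓ _
      rw [← mul_add, ← mul_add, ← Finset.sum_add_distrib, ← Finset.sum_add_distrib]
      congr 1
      exact Finset.sum_congr rfl fun p _ => by ring
    rw [Finset.sum_congr rfl hdec, Finset.sum_add_distrib, Finset.sum_add_distrib]
    have hb1 := hftl i k (θ i) (hθ i)
    -- bias term
    have hb3 : ∑ ℓ ∈ Finset.Icc 1 k, η ℓ * ∑ p, (θ i p - ρw ℓ i p)
        * (ownGrad (r i) i (ρw ℓ) p - Eg ℓ i p) ≤ 2 * β * (∑ ℓ ∈ Finset.Icc 1 k, η ℓ) := by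
      rw [show 2 * β * (∑ ℓ ∈ Finset.Icc 1 k, η ℓ) = ∑ ℓ ∈ Finset.Icc 1 k, η ℓ * (2*β) by
        rw [Finset.mul_sum]; exact Finset.sum_congr rfl fun ℓ _ => by ring]
      apply Finset.sum_le_sum
      intro ℓ hℓ
      have hℓ1 : 1 ≤ ℓ := (Finset.mem_Icc.1 hℓ).1
      apply mul_le_mul_of_nonneg_left _ (le_of_lt (hη ℓ))
      calc ∑ p, (θ i p - ρw ℓ i p) * (ownGrad (r i) i (ρw ℓ) p - Eg ℓ i p)
          ≤ ∑ p, |θ i p - ρw ℓ i p| * β := by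
            apply Finset.sum_le_sum
            intro p _
            calc (θ i p - ρw ℓ i p) * (ownGrad (r i) i (ρw ℓ) p - Eg ℓ i p)
                ≤ |(θ i p - ρw ℓ i p) * (ownGrad (r i) i (ρw ℓ) p - Eg ℓ i p)| := le_abs_self _
              _ = |θ i p - ρw ℓ i p| * |ownGrad (r i) i (ρw ℓ) p - Eg ℓ i p| := abs_mul _ _
              _ ≤ |θ i p - ρw ℓ i p| * β := by
                  apply mul_le_mul_of_nonneg_left _ (abs_nonneg _)
                  rw [abs_sub_comm]
                  exact hbias ℓ hℓ1 i p
        _ = (∑ p, |θ i p - ρw ℓ i p|) * β := by rw [Finset.sum_mul]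
        _ ≤ 2 * β := by
            apply mul_le_mul_of_nonneg_right _ hβ0
            calc ∑ p, |θ i p - ρw ℓ i p| ≤ ∑ p, (θ i p + ρw ℓ i p) := by
                  apply Finset.sum_le_sum
                  intro p _
                  have h1 := (hθsimp i).1 p
                  have h2 := (hsimp ℓ hℓ1 i).1 p
                  rw [abs_le]
                  constructor <;> nlinarith
              _ = 2 := by
                  rw [Finset.sum_add_distrib, (hθsimp i).2, (hsimp ℓ hℓ1 i).2]
                  norm_num
    -- noise term
    have hb2 : ∑ ℓ ∈ Finset.Icc 1 k, η ℓ * ∑ p, (θ i p - ρw ℓ i p) * (Eg ℓ i p - Rw ℓ i p)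
        ≤ ∑ p, (|∑ ℓ ∈ Finset.Icc 1 k, η ℓ * (Rw ℓ i p - Eg ℓ i p)|
            + |∑ ℓ ∈ Finset.Icc 1 k, η ℓ * ρw ℓ i p * (Rw ℓ i p - Eg ℓ i p)|) := by
      have hswap : ∑ ℓ ∈ Finset.Icc 1 k, η ℓ * ∑ p, (θ i p - ρw ℓ i p) * (Eg ℓ i p - Rw ℓ i p)
          = ∑ p, (θ i p * (-(∑ ℓ ∈ Finset.Icc 1 k, η ℓ * (Rw ℓ i p - Eg ℓ i p)))
              + ∑ ℓ ∈ Finset.Icc 1 k, η ℓ * ρw ℓ i p * (Rw ℓ i p - Eg ℓ i p)) := by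
        calc ∑ ℓ ∈ Finset.Icc 1 k, η ℓ * ∑ p, (θ i p - ρw ℓ i p) * (Eg ℓ i p - Rw ℓ i p)
            = ∑ ℓ ∈ Finset.Icc 1 k, ∑ p, (θ i p * (-(η ℓ * (Rw ℓ i p - Eg ℓ i p)))
                + η ℓ * ρw ℓ i p * (Rw ℓ i p - Eg ℓ i p)) := by
              refine Finset.sum_congr rfl fun ℓ _ => ?_
              rw [Finset.mul_sum]
              exact Finset.sum_congr rfl fun p _ => by ring
          _ = ∑ p, ∑ ℓ ∈ Finset.Icc 1 k, (θ i p * (-(η ℓ * (Rw ℓ i p - Eg ℓ i p)))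
                + η ℓ * ρw ℓ i p * (Rw ℓ i p - Eg ℓ i p)) := Finset.sum_comm
          _ = ∑ p, (θ i p * (-(∑ ℓ ∈ Finset.Icc 1 k, η ℓ * (Rw ℓ i p - Eg ℓ i p)))
              + ∑ ℓ ∈ Finset.Icc 1 k, η ℓ * ρw ℓ i p * (Rw ℓ i p - Eg ℓ i p)) := by
              refine Finset.sum_congr rfl fun p _ => ?_
              rw [Finset.sum_add_distrib]
              congr 1
              rw [← Finset.mul_sum]
              congr 1
              exact Finset.sum_neg_distrib _
      rw [hswap]
      apply Finset.sum_le_sum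
      intro p _
      have h0θ : 0 ≤ θ i p := (hθsimp i).1 p
      have h1θ : θ i p ≤ 1 := by
        have := Finset.single_le_sum (f := fun q => θ i q)
          (fun q _ => (hθsimp i).1 q) (Finset.mem_univ p)
        rw [(hθsimp i).2] at this
        exact this
      set N1 := ∑ ℓ ∈ Finset.Icc 1 k, η ℓ * (Rw ℓ i p - Eg ℓ i p)
      set N2 := ∑ ℓ ∈ Finset.Icc 1 k, η ℓ * ρw ℓ i p * (Rw ℓ i p - Eg ℓ i p)
      have ha : θ i p * (-N1) ≤ |N1| := by
        calc θ i p * (-N1) ≤ θ i p * |N1| :=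
              mul_le_mul_of_nonneg_left (neg_le_abs N1) h0θ
          _ ≤ 1 * |N1| := mul_le_mul_of_nonneg_right h1θ (abs_nonneg _)
          _ = |N1| := one_mul _
      linarith [le_abs_self N2]
    linarith [hb1, hb2, hb3]
  calc ∑ i, ∑ ℓ ∈ Finset.Icc 1 k, η ℓ * ∑ p, (θ i p - ρw ℓ i p) * ownGrad (r i) i (ρw ℓ) p
      ≤ ∑ i, (C i + (∑ ℓ ∈ Finset.Icc 1 k, 2 / K * (η ℓ)^2 * ∑ p, (Rw ℓ i p)^2)
        + 2 * β * (∑ ℓ ∈ Finset.Icc 1 k, η ℓ)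
        + ∑ p, (|∑ ℓ ∈ Finset.Icc 1 k, η ℓ * (Rw ℓ i p - Eg ℓ i p)|
            + |∑ ℓ ∈ Finset.Icc 1 k, η ℓ * ρw ℓ i p * (Rw ℓ i p - Eg ℓ i p)|)) :=
        Finset.sum_le_sum fun i _ => key i
    _ = (∑ i, C i)
        + (∑ i, ∑ ℓ ∈ Finset.Icc 1 k, 2 / K * (η ℓ)^2 * ∑ p, (Rw ℓ i p)^2)
        + 2 * n * β * (∑ ℓ ∈ Finset.Icc 1 k, η ℓ)
        + ∑ i, ∑ p, (|∑ ℓ ∈ Finset.Icc 1 k, η ℓ * (Rw ℓ i p - Eg ℓ i p)|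
            + |∑ ℓ ∈ Finset.Icc 1 k, η ℓ * ρw ℓ i p * (Rw ℓ i p - Eg ℓ i p)|) := by
        rw [Finset.sum_add_distrib, Finset.sum_add_distrib, Finset.sum_add_distrib,
          Finset.sum_const, Finset.card_univ, Fintype.card_fin]
        push_cast
        ring

end DANIaux

/-- almost-sure convergence of the averaged Nikaido–Isoda gap of
the dual-averaging iterates below `ε/2`. -/
theorem dual_averaging_NI_gap_as_convergence
    {n : ℕ} (hn : 0 < n)
    {S A : Fin n → Type*}
    [∀ j, Fintype (S j)] [∀ j, Nonempty (S j)]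
    [∀ j, Fintype (A j)] [∀ j, Nonempty (A j)]
    (r : ∀ _ : Fin n, (∀ j, S j) → (∀ j, A j) → ℝ)
    (hr : ∀ i s a, r i s a ∈ Set.Icc (0:ℝ) 1)
    (P : ∀ i : Fin n, Set ((S i × A i) → ℝ))
    (hPne : ∀ i, (P i).Nonempty) (hPcpt : ∀ i, IsCompact (P i))
    (hPcvx : ∀ i, Convex ℝ (P i)) (hPsub : ∀ i, P i ⊆ probSimplex (S i × A i))
    (δ : Fin n → ℝ) (hδ : ∀ i, δ i ∈ Set.Ioo (0:ℝ) 1)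
    (Pδ : ∀ i : Fin n, Set ((S i × A i) → ℝ))
    (hPδdef : ∀ i, Pδ i = {x ∈ P i | ∀ p, δ i ≤ x p})
    (hPδne : ∀ i, (Pδ i).Nonempty)
    -- probability space and filtration
    {Ω : Type*} [m0 : MeasurableSpace Ω] (μ : Measure Ω) [IsProbabilityMeasure μ]
    (F : Filtration ℕ m0)
    -- regularizers: K-strongly convex and continuous
    (K : ℝ) (hK : 0 < K)
    (h : ∀ i : Fin n, ((S i × A i) → ℝ) → ℝ)
    (hhconv : ∀ i, ConvexOn ℝ (Pδ i) (fun x => h i x - K / 2 * ∑ p, (x p) ^ 2))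
    (hhcont : ∀ i, ContinuousOn (h i) (Pδ i))
    -- step sizes: ∑ η^ℓ = ∞ and ∑ (η^ℓ)² < ∞
    (η : ℕ → ℝ) (hη : ∀ k, 0 < η k)
    (w : ℕ → ℝ) (hw : ∀ k, w k = ∑ ℓ ∈ Finset.Icc 1 k, η ℓ)
    (hdiv : Tendsto w atTop atTop)
    (hsq : Summable (fun ℓ => (η ℓ) ^ 2))
    -- gradient estimates: F^k-measurable, square-integrable
    (R : ℕ → Ω → ∀ i : Fin n, (S i × A i) → ℝ)
    (hRmeas : ∀ k i p, Measurable[F k] (fun ω => R k ω i p))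
    (hRsq : ∀ k i, Integrable (fun ω => ∑ p, (R k ω i p) ^ 2) μ)
    -- dual scores
    (Y : ℕ → Ω → ∀ i : Fin n, (S i × A i) → ℝ)
    (hY1 : ∀ ω i p, Y 1 ω i p = 0)
    (hYrec : ∀ k, 1 ≤ k → ∀ ω i p, Y (k + 1) ω i p = Y k ω i p + η k * R k ω i p)
    -- iterates: ρ_i^k = argmax over Pδ_i of ⟨ρ_i, Y_i^k⟩ − h_i(ρ_i)
    (ρ : ℕ → Ω → ∀ j, S j × A j → ℝ)
    (hρ : ∀ k, 1 ≤ k → ∀ ω i, ρ k ω i ∈ Pδ i ∧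
      ∀ x ∈ Pδ i, (∑ p, x p * Y k ω i p) - h i x ≤
        (∑ p, ρ k ω i p * Y k ω i p) - h i (ρ k ω i))
    -- accuracy and bias level
    (ε : ℝ) (hε : 0 < ε) (β : ℝ)
    (hβ : β ≤ ε / (6 * n * ∑ i : Fin n,
      ((Fintype.card (S i) : ℝ) * (Fintype.card (A i) : ℝ))))
    -- gradient-estimate assumptions: bias and conditional second moment
    (hbias : ∀ k, 1 ≤ k → ∀ i, ∀ᵐ ω ∂μ, ∀ p,
      |(μ[(fun ω' => R k ω' i p) | F (k - 1)]) ω - ownGrad (r i) i (ρ k ω) p| ≤ β)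
    (hmom : ∀ k, 1 ≤ k → ∀ i, ∀ᵐ ω ∂μ,
      (μ[(fun ω' => ∑ p, (R k ω' i p) ^ 2) | F (k - 1)]) ω ≤
        ((Fintype.card (S i) : ℝ) * (Fintype.card (A i) : ℝ)) / δ i) :
    -- conclusion: a.s. eventually max_{θ ∈ P^δ} ∑_{ℓ=1}^k (η^ℓ/w^k) Ψ(θ, ρ^ℓ) < ε/2
    ∀ᵐ ω ∂μ, ∃ K0 : ℕ, ∀ k, K0 ≤ k →
      ∀ θ : ∀ j, S j × A j → ℝ, (∀ i, θ i ∈ Pδ i) →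
        ∑ ℓ ∈ Finset.Icc 1 k, (η ℓ / w k) * NI r θ (ρ ℓ ω) < ε / 2 := by
  classical
  obtain ⟨i0⟩ : Nonempty (Fin n) := ⟨⟨0, hn⟩⟩
  -- structural facts about Pδ
  have hPδsub : ∀ i, Pδ i ⊆ P i := by
    intro i; rw [hPδdef i]; exact fun x hx => hx.1
  have hPδsimplex : ∀ i, Pδ i ⊆ probSimplex (S i × A i) :=
    fun i => (hPδsub i).trans (hPsub i)
  have hPδeq : ∀ i, Pδ i = P i ∩ {x | ∀ p, δ i ≤ x p} := by
    intro i; rw [hPδdef i]; rfl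
  have hhalf : ∀ i, {x : (S i × A i) → ℝ | ∀ p, δ i ≤ x p}
      = ⋂ p, {x : (S i × A i) → ℝ | δ i ≤ x p} := by
    intro i; ext x; simp [Set.mem_iInter]
  have hQcpt : ∀ i, IsCompact (Pδ i) := by
    intro i
    rw [hPδeq i]
    apply (hPcpt i).inter_right
    rw [hhalf i]
    exact isClosed_iInter fun p => isClosed_le continuous_const (continuous_apply p)
  have hQcvx : ∀ i, Convex ℝ (Pδ i) := by
    intro i
    rw [hPδeq i]
    apply (hPcvx i).inter
    rw [hhalf i]
    exact convex_iInter fun p => convex_halfSpace_ge ⟨fun a b => rfl, fun c a => rfl⟩ (δ i)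
  -- iterates as a continuous function of the scores
  have hρ_eq : ∀ k, 1 ≤ k → ∀ ω i, ρ k ω i
      = DANIaux.argA (hQcpt i) (hPδne i) (hhcont i) (Y k ω i) := by
    intro k hk ω i
    exact DANIaux.argA_eq (hQcpt i) (hPδne i) (hhcont i) (hQcvx i) hK (hhconv i)
      (hρ k hk ω i).1 (hρ k hk ω i).2
  -- measurability of the scores and iterates
  have hYmeas : ∀ k, 1 ≤ k → ∀ i p, Measurable[F (k-1)] (fun ω => Y k ω i p) := by
    intro k
    induction k with
    | zero => intro hk; exact absurd hk (by norm_num)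
    | succ m ih =>
      intro _ i p
      by_cases hm : m = 0
      · subst hm
        have heq : (fun ω => Y 1 ω i p) = fun _ => (0:ℝ) := funext fun ω => hY1 ω i p
        rw [heq]
        exact measurable_const
      · have hm1 : 1 ≤ m := Nat.one_le_iff_ne_zero.2 hm
        have heq : (fun ω => Y (m+1) ω i p) = fun ω => Y m ω i p + η m * R m ω i p :=
          funext fun ω => hYrec m hm1 ω i p
        rw [heq, show (m + 1) - 1 = m from rfl]
        have h1 : Measurable[F m] (fun ω => Y m ω i p) :=
          (ih hm1 i p).mono (F.mono (Nat.sub_le m 1)) le_rfl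
        exact h1.add ((hRmeas m i p).const_mul (η m))
  have hρmeas : ∀ k, 1 ≤ k → ∀ i p, Measurable[F (k-1)] (fun ω => ρ k ω i p) := by
    intro k hk i p
    have heq : (fun ω => ρ k ω i p)
        = (fun Yv => DANIaux.argA (hQcpt i) (hPδne i) (hhcont i) Yv p)
          ∘ (fun ω => Y k ω i) := funext fun ω => by
      simp only [Function.comp_apply]
      rw [hρ_eq k hk ω i]
    rw [heq]
    have hYm : Measurable[F (k-1)] (fun ω => Y k ω i) :=
      @measurable_pi_lambda Ω (S i × A i) (fun _ => ℝ) (F (k-1)) _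
        (fun ω => Y k ω i) (fun p' => hYmeas k hk i p')
    exact (DANIaux.argA_coord_continuous (hQcpt i) (hPδne i) (hhcont i) (hQcvx i) hK
      (hhconv i) p).measurable.comp hYm
  -- integrability and moment bounds for R
  have hRp2int : ∀ k i p, Integrable (fun ω => (R k ω i p)^2) μ := by
    intro k i p
    apply Integrable.mono' (hRsq k i)
    · exact (((hRmeas k i p).mono (F.le k) le_rfl).pow_const 2).aestronglyMeasurable
    · apply Filter.Eventually.of_forall
      intro ω
      rw [Real.norm_eq_abs, abs_of_nonneg (sq_nonneg _)]
      exact Finset.single_le_sum (f := fun q => (R k ω i q)^2)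
        (fun q _ => sq_nonneg _) (Finset.mem_univ p)
  set Bi : Fin n → ℝ := fun i =>
    ((Fintype.card (S i) : ℝ) * (Fintype.card (A i) : ℝ)) / δ i with hBidef
  have hBinn : ∀ i, 0 ≤ Bi i := by
    intro i
    have := (hδ i).1
    positivity
  have hRsum_bd : ∀ k, 1 ≤ k → ∀ i, ∫ ω, (∑ p, (R k ω i p)^2) ∂μ ≤ Bi i := by
    intro k hk i
    have h1 : ∫ ω, (∑ p, (R k ω i p)^2) ∂μ
        = ∫ ω, (μ[(fun ω' => ∑ p, (R k ω' i p)^2) | F (k-1)]) ω ∂μ :=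
      (integral_condExp (F.le (k-1))).symm
    rw [h1]
    calc ∫ ω, (μ[(fun ω' => ∑ p, (R k ω' i p)^2) | F (k-1)]) ω ∂μ
        ≤ ∫ _ω, Bi i ∂μ :=
          integral_mono_ae integrable_condExp (integrable_const _) (hmom k hk i)
      _ = Bi i := by simp
  have hRp2bd : ∀ k, 1 ≤ k → ∀ i p, ∫ ω, (R k ω i p)^2 ∂μ ≤ Bi i := by
    intro k hk i p
    refine le_trans (integral_mono (hRp2int k i p) (hRsq k i) ?_) (hRsum_bd k hk i)
    intro ω
    exact Finset.single_le_sum (f := fun q => (R k ω i q)^2)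
      (fun q _ => sq_nonneg _) (Finset.mem_univ p)
  -- β is nonnegative
  haveI : (MeasureTheory.ae μ).NeBot := ae_neBot.2 (IsProbabilityMeasure.ne_zero μ)
  have hβ0 : 0 ≤ β := by
    obtain ⟨ω, hω⟩ := (hbias 1 le_rfl i0).exists
    exact le_trans (abs_nonneg _) (hω (Classical.arbitrary _))
  -- conditional expectations are bounded
  have hEgbd : ∀ k, 1 ≤ k → ∀ i p, ∀ᵐ ω ∂μ,
      |(μ[(fun ω' => R k ω' i p) | F (k-1)]) ω| ≤ 1 + β := by
    intro k hk i p
    filter_upwards [hbias k hk i] with ω hω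
    have h1 := hω p
    have hmem : ∀ j, ρ k ω j ∈ probSimplex (S j × A j) :=
      fun j => hPδsimplex j (hρ k hk ω j).1
    have h2 : 0 ≤ ownGrad (r i) i (ρ k ω) p :=
      DANIaux.ownGrad_nonneg (r i) (hr i) i (ρ k ω) hmem p
    have h3 : ownGrad (r i) i (ρ k ω) p ≤ 1 :=
      DANIaux.ownGrad_le_one (r i) (hr i) i (ρ k ω) hmem p
    calc |(μ[(fun ω' => R k ω' i p) | F (k-1)]) ω|
        = |((μ[(fun ω' => R k ω' i p) | F (k-1)]) ω - ownGrad (r i) i (ρ k ω) p)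
            + ownGrad (r i) i (ρ k ω) p| := by ring_nf
      _ ≤ |(μ[(fun ω' => R k ω' i p) | F (k-1)]) ω - ownGrad (r i) i (ρ k ω) p|
            + |ownGrad (r i) i (ρ k ω) p| := abs_add_le _ _
      _ ≤ β + 1 := add_le_add h1 (abs_le.2 ⟨by linarith, h3⟩)
      _ = 1 + β := by ring
  -- martingale convergence for the two noise sums
  have hmart1 : ∀ i p, ∀ᵐ ω ∂μ, ∃ L : ℝ, Filter.Tendsto
      (fun k => ∑ ℓ ∈ Finset.Icc 1 k, η ℓ
        * (R ℓ ω i p - (μ[(fun ω' => R ℓ ω' i p) | F (ℓ-1)]) ω)) Filter.atTop (nhds L) := by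
    intro i p
    have h0 := DANIaux.noise_mart_conv (μ := μ) F (fun k ω => R k ω i p)
      (fun _ _ => (1:ℝ)) η (Bi i) (1+β) (hBinn i)
      (fun k hk => hRmeas k i p) (fun k hk => hRp2int k i p)
      (fun k hk => hRp2bd k hk i p) (fun k hk => hEgbd k hk i p)
      (fun k hk => stronglyMeasurable_const) (fun k hk ω => by norm_num) hsq
    filter_upwards [h0] with ω hω
    obtain ⟨L, hL⟩ := hω
    refine ⟨L, ?_⟩
    have heq : ∀ k, ∑ ℓ ∈ Finset.Icc 1 k, η ℓ * 1
          * (R ℓ ω i p - (μ[(fun ω' => R ℓ ω' i p) | F (ℓ-1)]) ω)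
        = ∑ ℓ ∈ Finset.Icc 1 k, η ℓ
          * (R ℓ ω i p - (μ[(fun ω' => R ℓ ω' i p) | F (ℓ-1)]) ω) :=
      fun k => Finset.sum_congr rfl fun ℓ _ => by ring
    exact (Filter.tendsto_congr heq).1 hL
  have hmart2 : ∀ i p, ∀ᵐ ω ∂μ, ∃ L : ℝ, Filter.Tendsto
      (fun k => ∑ ℓ ∈ Finset.Icc 1 k, η ℓ * ρ ℓ ω i p
        * (R ℓ ω i p - (μ[(fun ω' => R ℓ ω' i p) | F (ℓ-1)]) ω)) Filter.atTop (nhds L) := by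
    intro i p
    apply DANIaux.noise_mart_conv (μ := μ) F (fun k ω => R k ω i p)
      (fun k ω => ρ k ω i p) η (Bi i) (1+β) (hBinn i)
      (fun k hk => hRmeas k i p) (fun k hk => hRp2int k i p)
      (fun k hk => hRp2bd k hk i p) (fun k hk => hEgbd k hk i p)
      (fun k hk => (hρmeas k hk i p).stronglyMeasurable) ?_ hsq
    intro k hk ω
    have hmem := hPδsimplex i (hρ k hk ω i).1
    have h1 : 0 ≤ ρ k ω i p := hmem.1 p
    have h2 : ρ k ω i p ≤ 1 := by
      have := Finset.single_le_sum (f := fun q => ρ k ω i q)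
        (fun q _ => hmem.1 q) (Finset.mem_univ p)
      rw [hmem.2] at this
      exact this
    rw [abs_le]
    exact ⟨by linarith, h2⟩
  -- a.s. summability of the squared-norm series
  set tot : ℕ → Ω → ℝ := fun ℓ ω => ∑ i, ∑ p, (R ℓ ω i p)^2 with htot
  have htotnn : ∀ ℓ ω, 0 ≤ tot ℓ ω :=
    fun ℓ ω => Finset.sum_nonneg fun i _ => Finset.sum_nonneg fun p _ => sq_nonneg _
  have htot_int : ∀ ℓ, Integrable (tot ℓ) μ := by
    intro ℓ
    have := integrable_finset_sum (μ := μ) Finset.univ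
      (f := fun (i : Fin n) ω => ∑ p, (R ℓ ω i p)^2) (fun i _ => hRsq ℓ i)
    exact this
  have htot_bd : ∀ ℓ, 1 ≤ ℓ → ∫ ω, tot ℓ ω ∂μ ≤ ∑ i, Bi i := by
    intro ℓ hℓ
    rw [htot, integral_finset_sum Finset.univ (fun i _ => hRsq ℓ i)]
    exact Finset.sum_le_sum fun i _ => hRsum_bd ℓ hℓ i
  have hsummable : ∀ᵐ ω ∂μ, Summable (fun j => (η (j+1))^2 * tot (j+1) ω) := by
    apply DANIaux.as_summable (μ := μ) _ (fun j => (η (j+1))^2 * (∑ i, Bi i))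
    · intro j ω
      exact mul_nonneg (sq_nonneg _) (htotnn _ ω)
    · exact fun j => (htot_int (j+1)).const_mul _
    · intro j
      rw [integral_const_mul]
      exact mul_le_mul_of_nonneg_left (htot_bd (j+1) (Nat.le_add_left 1 j)) (sq_nonneg _)
    · exact ((summable_nat_add_iff 1).2 hsq).mul_right _
  -- regularizer oscillation bounds
  have hCex : ∀ i, ∃ Ci : ℝ, ∀ x ∈ Pδ i, ∀ y ∈ Pδ i, h i x - h i y ≤ Ci := by
    intro i
    obtain ⟨xm, hxm, hxmax⟩ := (hQcpt i).exists_isMaxOn (hPδne i) (hhcont i)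
    obtain ⟨ym, hym, hymin⟩ := (hQcpt i).exists_isMinOn (hPδne i) (hhcont i)
    exact ⟨h i xm - h i ym, fun x hx y hy => sub_le_sub (hxmax hx) (hymin hy)⟩
  choose C hC using hCex
  -- deterministic FTL regret bound, valid for every ω
  have hftlω : ∀ ω, ∀ i : Fin n, ∀ k, ∀ θi ∈ Pδ i,
      ∑ ℓ ∈ Finset.Icc 1 k, η ℓ * ∑ p, (θi p - ρ ℓ ω i p) * R ℓ ω i p
        ≤ C i + ∑ ℓ ∈ Finset.Icc 1 k, 2 / K * (η ℓ)^2 * ∑ p, (R ℓ ω i p)^2 := by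
    intro ω i k θi hθi
    have h1 := DANIaux.ftl_regret (hQcvx i) hK (hhconv i) η
      (fun ℓ => R ℓ ω i) (fun ℓ => Y ℓ ω i) (fun ℓ => ρ ℓ ω i)
      (fun p => hY1 ω i p) (fun ℓ hℓ p => hYrec ℓ hℓ ω i p)
      (fun ℓ hℓ => (hρ ℓ hℓ ω i).1) (fun ℓ hℓ => (hρ ℓ hℓ ω i).2) k θi hθi
    have h2 := hC i θi hθi (ρ 1 ω i) ((hρ 1 le_rfl ω i).1)
    linarith
  -- combine all a.e. statements
  have hbias_all : ∀ᵐ ω ∂μ, ∀ k : ℕ, ∀ i : Fin n, 1 ≤ k → ∀ p,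
      |(μ[(fun ω' => R k ω' i p) | F (k-1)]) ω - ownGrad (r i) i (ρ k ω) p| ≤ β := by
    rw [MeasureTheory.ae_all_iff]
    intro k
    rw [MeasureTheory.ae_all_iff]
    intro i
    by_cases hk : 1 ≤ k
    · filter_upwards [hbias k hk i] with ω hω _
      exact hω
    · filter_upwards with ω hk'
      exact absurd hk' hk
  have hmart1_all : ∀ᵐ ω ∂μ, ∀ i p, ∃ L : ℝ, Filter.Tendsto
      (fun k => ∑ ℓ ∈ Finset.Icc 1 k, η ℓ
        * (R ℓ ω i p - (μ[(fun ω' => R ℓ ω' i p) | F (ℓ-1)]) ω)) Filter.atTop (nhds L) := by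
    rw [MeasureTheory.ae_all_iff]
    intro i
    rw [MeasureTheory.ae_all_iff]
    intro p
    exact hmart1 i p
  have hmart2_all : ∀ᵐ ω ∂μ, ∀ i p, ∃ L : ℝ, Filter.Tendsto
      (fun k => ∑ ℓ ∈ Finset.Icc 1 k, η ℓ * ρ ℓ ω i p
        * (R ℓ ω i p - (μ[(fun ω' => R ℓ ω' i p) | F (ℓ-1)]) ω)) Filter.atTop (nhds L) := by
    rw [MeasureTheory.ae_all_iff]
    intro i
    rw [MeasureTheory.ae_all_iff]
    intro p
    exact hmart2 i p
  -- the size of the game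
  set Sc : ℝ := ∑ i : Fin n, ((Fintype.card (S i) : ℝ) * (Fintype.card (A i) : ℝ)) with hSc
  have hSc1 : (1:ℝ) ≤ Sc := by
    rw [hSc]
    have h1 : ∀ i : Fin n, (1:ℝ) ≤ (Fintype.card (S i) : ℝ) * (Fintype.card (A i) : ℝ) := by
      intro i
      have hS : 1 ≤ Fintype.card (S i) := Fintype.card_pos
      have hA : 1 ≤ Fintype.card (A i) := Fintype.card_pos
      have hS' : (1:ℝ) ≤ (Fintype.card (S i) : ℝ) := by exact_mod_cast hS
      have hA' : (1:ℝ) ≤ (Fintype.card (A i) : ℝ) := by exact_mod_cast hA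
      nlinarith
    calc (1:ℝ) ≤ (n : ℝ) := by exact_mod_cast hn
      _ = ∑ _i : Fin n, (1:ℝ) := by simp
      _ ≤ _ := Finset.sum_le_sum fun i _ => h1 i
  have hn' : (0:ℝ) < n := by exact_mod_cast hn
  have h2nβ : 2 * (n:ℝ) * β ≤ ε / 3 := by
    have hden : (0:ℝ) < 6 * n * Sc := by positivity
    calc 2 * (n:ℝ) * β ≤ 2 * n * (ε / (6 * n * Sc)) := by
          apply mul_le_mul_of_nonneg_left _ (by positivity)
          exact hβ
      _ = ε / (3 * Sc) := by field_simp; ring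
      _ ≤ ε / 3 := by
          apply div_le_div_of_nonneg_left (le_of_lt hε) (by norm_num)
          linarith
  -- the main a.e. argument
  filter_upwards [hbias_all, hmart1_all, hmart2_all, hsummable] with ω hb hm1 hm2 hsum
  -- limits of the noise sums
  choose L1 hL1 using hm1
  choose L2 hL2 using hm2
  -- convergence of the weighted square sums
  set Tk : ℕ → ℝ := fun k => ∑ ℓ ∈ Finset.Icc 1 k, (η ℓ)^2 * tot ℓ ω with hTk
  have hIcc_range : ∀ (f : ℕ → ℝ) (k : ℕ),
      ∑ ℓ ∈ Finset.Icc 1 k, f ℓ = ∑ j ∈ Finset.range k, f (j+1) := by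
    intro f k
    induction k with
    | zero => simp
    | succ m ih =>
      rw [Finset.sum_Icc_succ_top (Nat.le_add_left 1 m), ih, Finset.sum_range_succ]
  have hTtend : Filter.Tendsto Tk Filter.atTop (nhds (∑' j, (η (j+1))^2 * tot (j+1) ω)) := by
    have h0 := hsum.hasSum.tendsto_sum_nat
    refine Filter.Tendsto.congr (fun k => ?_) h0
    exact (hIcc_range (fun ℓ => (η ℓ)^2 * tot ℓ ω) k).symm
  -- numerator of the vanishing part
  set Num : ℕ → ℝ := fun k => (∑ i, C i) + 2 / K * Tk k
      + ∑ i, ∑ p, (|∑ ℓ ∈ Finset.Icc 1 k, η ℓ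
            * (R ℓ ω i p - (μ[(fun ω' => R ℓ ω' i p) | F (ℓ-1)]) ω)|
          + |∑ ℓ ∈ Finset.Icc 1 k, η ℓ * ρ ℓ ω i p
            * (R ℓ ω i p - (μ[(fun ω' => R ℓ ω' i p) | F (ℓ-1)]) ω)|) with hNum
  have hNumtend : Filter.Tendsto Num Filter.atTop
      (nhds ((∑ i, C i) + 2 / K * (∑' j, (η (j+1))^2 * tot (j+1) ω)
        + ∑ i, ∑ p, (|L1 i p| + |L2 i p|))) := by
    apply Filter.Tendsto.add
    apply Filter.Tendsto.add
    · exact tendsto_const_nhds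
    · exact hTtend.const_mul _
    · apply tendsto_finset_sum
      intro i _
      apply tendsto_finset_sum
      intro p _
      exact ((hL1 i p).abs).add ((hL2 i p).abs)
  have hratio : Filter.Tendsto (fun k => Num k / w k) Filter.atTop (nhds 0) :=
    Filter.Tendsto.div_atTop hNumtend hdiv
  have hev : ∀ᶠ k in Filter.atTop, Num k / w k < ε / 6 :=
    hratio.eventually_lt_const (by positivity)
  obtain ⟨K0, hK0⟩ := Filter.eventually_atTop.1 (hev.and (Filter.eventually_ge_atTop 1))
  refine ⟨K0, ?_⟩
  intro k hk θ hθ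
  obtain ⟨hevk, hk1⟩ := hK0 k hk
  have hwk : 0 < w k := by
    rw [hw k]
    apply Finset.sum_pos (fun ℓ _ => hη ℓ)
    exact Finset.nonempty_Icc.2 hk1
  -- apply the deterministic key bound
  have hkb := DANIaux.key_bound r Pδ hPδsimplex η hη K (fun ℓ => R ℓ ω) (fun ℓ => ρ ℓ ω)
    (fun ℓ hℓ j => (hρ ℓ hℓ ω j).1)
    (fun ℓ i p => (μ[(fun ω' => R ℓ ω' i p) | F (ℓ-1)]) ω) β hβ0
    (fun ℓ hℓ i p => hb ℓ i hℓ p) C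
    (fun i k' θi hθi => hftlω ω i k' θi hθi) k θ hθ
  -- identify the second term with Tk
  have hterm2 : (∑ i, ∑ ℓ ∈ Finset.Icc 1 k, 2 / K * (η ℓ)^2 * ∑ p, (R ℓ ω i p)^2)
      = 2 / K * Tk k := by
    rw [hTk, Finset.mul_sum, Finset.sum_comm]
    refine Finset.sum_congr rfl fun ℓ _ => ?_
    rw [htot, Finset.mul_sum, Finset.mul_sum]
    refine Finset.sum_congr rfl fun i _ => by ring
  rw [hterm2] at hkb
  have hwk_eq : ∑ ℓ ∈ Finset.Icc 1 k, η ℓ = w k := (hw k).symm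
  rw [hwk_eq] at hkb
  -- conclude
  have hfinal : ∑ ℓ ∈ Finset.Icc 1 k, η ℓ * NI r θ (ρ ℓ ω) ≤ Num k + 2 * n * β * w k := by
    rw [hNum]
    linarith [hkb]
  have hgoal_eq : ∑ ℓ ∈ Finset.Icc 1 k, (η ℓ / w k) * NI r θ (ρ ℓ ω)
      = (∑ ℓ ∈ Finset.Icc 1 k, η ℓ * NI r θ (ρ ℓ ω)) / w k := by
    rw [Finset.sum_div]
    exact Finset.sum_congr rfl fun ℓ _ => by ring
  rw [hgoal_eq]
  calc (∑ ℓ ∈ Finset.Icc 1 k, η ℓ * NI r θ (ρ ℓ ω)) / w k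
      ≤ (Num k + 2 * n * β * w k) / w k := by
        exact (div_le_div_iff_of_pos_right hwk).mpr hfinal
    _ = Num k / w k + 2 * n * β := by
        rw [add_div, mul_div_assoc, div_self (ne_of_gt hwk), mul_one]
    _ < ε / 6 + ε / 3 := by
        apply add_lt_add_of_lt_of_le hevk h2nβ
    _ = ε / 2 := by ring
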